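/- Let g ∈ G_0(r,n) (i.e., the last color c_n = 0) and 0 ≤ i < r. Define g^i by adding i mod r to every color of g. Then fdes(g^i) = fdes(g) + i and fmaj(g^i) = fmaj(g) + n·i. -/
import Mathlib


open Finset

namespace ColoredPerm

/-- An element of the wreath product `G(r,n) = ℤ_r ≀ S_n`: a color vector and a permutation. -/
abbrev CPerm (r n : ℕ) := (Fin n → Fin r) × Equiv.Perm (Fin n)

variable {r n : ℕ}

/-- Descent at the (0-indexed) position `j`, i.e. the paper's descent at position `j+1`:
`γ_{j+1} ≻ γ_{j+2}` in the order where higher colors are smaller, ties by the values. -/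
def isDesc (g : CPerm r n) (j : ℕ) : Prop :=
  ∃ h : j + 1 < n,
    (g.1 ⟨j, Nat.lt_of_succ_lt h⟩ < g.1 ⟨j + 1, h⟩) ∨
      (g.1 ⟨j, Nat.lt_of_succ_lt h⟩ = g.1 ⟨j + 1, h⟩ ∧
        g.2 ⟨j + 1, h⟩ < g.2 ⟨j, Nat.lt_of_succ_lt h⟩)

instance (g : CPerm r n) (j : ℕ) : Decidable (isDesc g j) := by
  unfold isDesc; exact exists_prop_decidable _

/-- The descent set (0-indexed positions). -/
def Des (g : CPerm r n) : Finset ℕ := (Finset.range n).filter (isDesc g)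

def des (g : CPerm r n) : ℕ := (Des g).card

/-- The major index: sum of the (1-indexed) descent positions. -/
def maj (g : CPerm r n) : ℕ := ∑ j ∈ Des g, (j + 1)

/-- The color weight. -/
def col (g : CPerm r n) : ℕ := ∑ i, (g.1 i : ℕ)

/-- The flag major index. -/
def fmaj (g : CPerm r n) : ℕ := r * maj g + col g

/-- `dstat g i` is the paper's `d_i(g)`: the number of (1-indexed) descents `≥ i`. -/
def dstat (g : CPerm r n) (i : ℕ) : ℕ := ((Des g).filter fun j => i ≤ j + 1).card

/-- `fstat g i` is the paper's `f_{i+1}(g) = r·d_{i+1}(g) + c_{i+1}(g)` (0-indexed `i`). -/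
def fstat (g : CPerm r n) (i : Fin n) : ℕ := r * dstat g ((i : ℕ) + 1) + (g.1 i : ℕ)

/-- The flag descent number `fdes = r·des + c_1`. -/
def fdes (g : CPerm r n) (hn : 0 < n) : ℕ := r * des g + (g.1 ⟨0, hn⟩ : ℕ)

/-- `Γ(r,p,n)`: colored permutations whose last color is `< d = r/p`. -/
def Gamma (r p n : ℕ) (hn : 0 < n) : Finset (CPerm r n) :=
  Finset.univ.filter fun g => (g.1 ⟨n - 1, Nat.sub_lt hn one_pos⟩ : ℕ) < r / p

/-- `G(r,p,n)` as the set of colored permutations with color weight `≡ 0 (mod p)`. -/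
def Hfin (r p n : ℕ) : Finset (CPerm r n) :=
  Finset.univ.filter fun g => (∑ i, (g.1 i : ℕ)) % p = 0

end ColoredPerm

namespace ColoredPerm

/-- `g^i`: add `i` (mod `r`) to every color of `g`. -/
def shiftg {r n : ℕ} (hr : 0 < r) (g : CPerm r n) (i : ℕ) : CPerm r n :=
  (fun j => ⟨((g.1 j : ℕ) + i) % r, Nat.mod_lt _ hr⟩, g.2)

end ColoredPerm

namespace ColoredPerm

variable {r n : ℕ}

theorem isDesc_iff' (g : CPerm r n) {j : ℕ} (hj : j + 1 < n) :
    isDesc g j ↔ ((g.1 ⟨j, Nat.lt_of_succ_lt hj⟩ : ℕ) < (g.1 ⟨j + 1, hj⟩ : ℕ) ∨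
      ((g.1 ⟨j, Nat.lt_of_succ_lt hj⟩ : ℕ) = (g.1 ⟨j + 1, hj⟩ : ℕ) ∧
        g.2 ⟨j + 1, hj⟩ < g.2 ⟨j, Nat.lt_of_succ_lt hj⟩)) := by
  constructor
  · rintro ⟨h, h1 | ⟨h1, h2⟩⟩
    · exact Or.inl h1
    · exact Or.inr ⟨congrArg Fin.val h1, h2⟩
  · rintro (h1 | ⟨h1, h2⟩)
    · exact ⟨hj, Or.inl h1⟩
    · exact ⟨hj, Or.inr ⟨Fin.ext h1, h2⟩⟩

theorem Des_eq' (g : CPerm r n) : Des g = (Finset.range (n - 1)).filter (isDesc g) := by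
  ext k
  simp only [Des, Finset.mem_filter, Finset.mem_range]
  constructor
  · rintro ⟨h1, h2⟩
    obtain ⟨h3, -⟩ := id h2
    exact ⟨by omega, h2⟩
  · rintro ⟨h1, h2⟩
    exact ⟨by omega, h2⟩

end ColoredPerm

open ColoredPerm in
/-- For `g ∈ G_0` (last color `0`) and `0 ≤ i < r`:
`fdes(g^i) = fdes(g) + i` and `fmaj(g^i) = fmaj(g) + n·i`. -/
theorem shift_fdes_fmaj (r n : ℕ) (hr : 0 < r) (hn : 0 < n) (g : CPerm r n)
    (hg : (g.1 ⟨n - 1, Nat.sub_lt hn one_pos⟩ : ℕ) = 0) (i : ℕ) (hi : i < r) :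
    fdes (shiftg hr g i) hn = fdes g hn + i ∧
      fmaj (shiftg hr g i) = fmaj g + n * i := by
  classical
  obtain ⟨m, rfl⟩ : ∃ m, n = m + 1 := ⟨n - 1, by omega⟩
  set g' := shiftg hr g i with hg'def
  -- the wrap indicator
  set w : ℕ → ℕ := fun k =>
    if h : k < m + 1 then (if r ≤ (g.1 ⟨k, h⟩ : ℕ) + i then 1 else 0) else 0 with hwdef
  have hwval : ∀ (k : ℕ) (h : k < m + 1),
      w k = if r ≤ (g.1 ⟨k, h⟩ : ℕ) + i then 1 else 0 := by
    intro k h; simp only [hwdef, dif_pos h]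
  have hmod : ∀ a : Fin (m + 1),
      ((g.1 a : ℕ) + i) % r + r * w (a : ℕ) = (g.1 a : ℕ) + i := by
    intro a
    have h1 : (g.1 a : ℕ) < r := (g.1 a).isLt
    rw [hwval _ a.isLt, Fin.eta]
    by_cases h : r ≤ (g.1 a : ℕ) + i
    · rw [if_pos h, mul_one]
      have : ((g.1 a : ℕ) + i) % r = (g.1 a : ℕ) + i - r := by
        rw [Nat.mod_eq_sub_mod h, Nat.mod_eq_of_lt (by omega)]
      omega
    · rw [if_neg h, mul_zero, add_zero, Nat.mod_eq_of_lt (by omega)]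
  have hmlt : m < m + 1 := Nat.lt_succ_self m
  have hcm : (g.1 ⟨m, hmlt⟩ : ℕ) = 0 := hg
  have hwlast : w m = 0 := by
    rw [hwval m hmlt, hcm, if_neg (by omega)]
  -- key case analysis at each position
  have key : ∀ j : ℕ, j + 1 < m + 1 →
      ((isDesc g' j ↔ isDesc g j) ∧ w j = w (j + 1)) ∨
      (isDesc g' j ∧ ¬ isDesc g j ∧ w j = 1 ∧ w (j + 1) = 0) ∨
      (¬ isDesc g' j ∧ isDesc g j ∧ w j = 0 ∧ w (j + 1) = 1) := by
    intro j hj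
    have hj0 : j < m + 1 := Nat.lt_of_succ_lt hj
    have hdg := isDesc_iff' g hj
    have hdg' : isDesc g' j ↔
        (((g.1 ⟨j, Nat.lt_of_succ_lt hj⟩ : ℕ) + i) % r <
            ((g.1 ⟨j + 1, hj⟩ : ℕ) + i) % r ∨
          ((((g.1 ⟨j, Nat.lt_of_succ_lt hj⟩ : ℕ) + i) % r =
              ((g.1 ⟨j + 1, hj⟩ : ℕ) + i) % r) ∧
            g.2 ⟨j + 1, hj⟩ < g.2 ⟨j, Nat.lt_of_succ_lt hj⟩)) := isDesc_iff' g' hj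
    have ma : ((g.1 ⟨j, Nat.lt_of_succ_lt hj⟩ : ℕ) + i) % r + r * w j =
        (g.1 ⟨j, Nat.lt_of_succ_lt hj⟩ : ℕ) + i := hmod ⟨j, Nat.lt_of_succ_lt hj⟩
    have mb : ((g.1 ⟨j + 1, hj⟩ : ℕ) + i) % r + r * w (j + 1) =
        (g.1 ⟨j + 1, hj⟩ : ℕ) + i := hmod ⟨j + 1, hj⟩
    have h1 : (g.1 ⟨j, Nat.lt_of_succ_lt hj⟩ : ℕ) < r := (g.1 _).isLt
    have h2 : (g.1 ⟨j + 1, hj⟩ : ℕ) < r := (g.1 _).isLt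
    have hwa : w j = if r ≤ (g.1 ⟨j, Nat.lt_of_succ_lt hj⟩ : ℕ) + i then 1 else 0 :=
      hwval j hj0
    have hwb : w (j + 1) = if r ≤ (g.1 ⟨j + 1, hj⟩ : ℕ) + i then 1 else 0 :=
      hwval (j + 1) hj
    by_cases wa : r ≤ (g.1 ⟨j, Nat.lt_of_succ_lt hj⟩ : ℕ) + i <;>
      by_cases wb : r ≤ (g.1 ⟨j + 1, hj⟩ : ℕ) + i
    · rw [if_pos wa] at hwa
      rw [if_pos wb] at hwb
      rw [hwa, mul_one] at ma
      rw [hwb, mul_one] at mb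
      left
      refine ⟨?_, by rw [hwa, hwb]⟩
      rw [hdg, hdg']
      have e1 : ((g.1 ⟨j, Nat.lt_of_succ_lt hj⟩ : ℕ) + i) % r <
          ((g.1 ⟨j + 1, hj⟩ : ℕ) + i) % r ↔
          (g.1 ⟨j, Nat.lt_of_succ_lt hj⟩ : ℕ) < (g.1 ⟨j + 1, hj⟩ : ℕ) := by omega
      have e2 : ((g.1 ⟨j, Nat.lt_of_succ_lt hj⟩ : ℕ) + i) % r =
          ((g.1 ⟨j + 1, hj⟩ : ℕ) + i) % r ↔
          (g.1 ⟨j, Nat.lt_of_succ_lt hj⟩ : ℕ) = (g.1 ⟨j + 1, hj⟩ : ℕ) := by omega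
      rw [e1, e2]
    · rw [if_pos wa] at hwa
      rw [if_neg wb] at hwb
      rw [hwa, mul_one] at ma
      rw [hwb, mul_zero, add_zero] at mb
      right; left
      refine ⟨?_, ?_, hwa, hwb⟩
      · rw [hdg']; left; omega
      · rw [hdg]; rintro (h | ⟨h, -⟩) <;> omega
    · rw [if_neg wa] at hwa
      rw [if_pos wb] at hwb
      rw [hwa, mul_zero, add_zero] at ma
      rw [hwb, mul_one] at mb
      right; right
      refine ⟨?_, ?_, hwa, hwb⟩
      · rw [hdg']; rintro (h | ⟨h, -⟩) <;> omega
      · rw [hdg]; left; omega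
    · rw [if_neg wa] at hwa
      rw [if_neg wb] at hwb
      rw [hwa, mul_zero, add_zero] at ma
      rw [hwb, mul_zero, add_zero] at mb
      left
      refine ⟨?_, by rw [hwa, hwb]⟩
      rw [hdg, hdg']
      have e1 : ((g.1 ⟨j, Nat.lt_of_succ_lt hj⟩ : ℕ) + i) % r <
          ((g.1 ⟨j + 1, hj⟩ : ℕ) + i) % r ↔
          (g.1 ⟨j, Nat.lt_of_succ_lt hj⟩ : ℕ) < (g.1 ⟨j + 1, hj⟩ : ℕ) := by omega
      have e2 : ((g.1 ⟨j, Nat.lt_of_succ_lt hj⟩ : ℕ) + i) % r =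
          ((g.1 ⟨j + 1, hj⟩ : ℕ) + i) % r ↔
          (g.1 ⟨j, Nat.lt_of_succ_lt hj⟩ : ℕ) = (g.1 ⟨j + 1, hj⟩ : ℕ) := by omega
      rw [e1, e2]
  have key1 : ∀ j ∈ Finset.range m,
      (if isDesc g' j then 1 else 0) + w (j + 1) = (if isDesc g j then 1 else 0) + w j := by
    intro j hjm
    rw [Finset.mem_range] at hjm
    have hj : j + 1 < m + 1 := by omega
    rcases key j hj with ⟨hiff, hww⟩ | ⟨k1, k2, k3, k4⟩ | ⟨k1, k2, k3, k4⟩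
    · simp only [hiff, hww]
    · simp [k1, k2, k3, k4]
    · simp [k1, k2, k3, k4]
  have key2 : ∀ j ∈ Finset.range m,
      (if isDesc g' j then (j + 1) else 0) + (j + 1) * w (j + 1) =
        (if isDesc g j then (j + 1) else 0) + (j + 1) * w j := by
    intro j hjm
    rw [Finset.mem_range] at hjm
    have hj : j + 1 < m + 1 := by omega
    rcases key j hj with ⟨hiff, hww⟩ | ⟨k1, k2, k3, k4⟩ | ⟨k1, k2, k3, k4⟩
    · simp only [hiff, hww]
    · simp [k1, k2, k3, k4]
    · simp [k1, k2, k3, k4]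
  have hDesg : Des g = (Finset.range m).filter (isDesc g) := by
    simpa using Des_eq' g
  have hDesg' : Des g' = (Finset.range m).filter (isDesc g') := by
    simpa using Des_eq' g'
  -- descent sums
  have hdes : des g' + ∑ j ∈ Finset.range m, w (j + 1) =
      des g + ∑ j ∈ Finset.range m, w j := by
    rw [des, des, hDesg, hDesg', Finset.card_filter, Finset.card_filter,
      ← Finset.sum_add_distrib, ← Finset.sum_add_distrib]
    exact Finset.sum_congr rfl key1
  have hmaj : maj g' + ∑ j ∈ Finset.range m, (j + 1) * w (j + 1) =
      maj g + ∑ j ∈ Finset.range m, (j + 1) * w j := by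
    rw [maj, maj, hDesg, hDesg', Finset.sum_filter, Finset.sum_filter,
      ← Finset.sum_add_distrib, ← Finset.sum_add_distrib]
    exact Finset.sum_congr rfl key2
  set W := ∑ j ∈ Finset.range m, w j with hW
  -- telescoping
  have T : (∑ j ∈ Finset.range m, w (j + 1)) + w 0 = W + w m := by
    rw [hW, ← Finset.sum_range_succ, ← Finset.sum_range_succ' w m]
  have Tw : (∑ j ∈ Finset.range m, (j + 1) * w (j + 1)) + 0 * w 0 =
      (∑ j ∈ Finset.range m, j * w j) + m * w m := by
    rw [← Finset.sum_range_succ (fun k => k * w k) m,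
      ← Finset.sum_range_succ' (fun k => k * w k) m]
  have Hsplit : ∑ j ∈ Finset.range m, (j + 1) * w j =
      (∑ j ∈ Finset.range m, j * w j) + W := by
    rw [hW, ← Finset.sum_add_distrib]
    exact Finset.sum_congr rfl fun j _ => by ring
  have hdes2 : des g' = des g + w 0 := by
    rw [hwlast] at T
    omega
  have hmaj2 : maj g' = maj g + W := by
    rw [hwlast, Nat.mul_zero, Nat.zero_mul, Nat.add_zero, Nat.add_zero] at Tw
    omega
  -- color sum
  have hWfin : ∑ a : Fin (m + 1), w (a : ℕ) = W := by
    rw [Fin.sum_univ_eq_sum_range w (m + 1), Finset.sum_range_succ, hwlast,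
      Nat.add_zero, hW]
  have hcolg' : col g' = ∑ a : Fin (m + 1), ((g.1 a : ℕ) + i) % r := rfl
  have hcol : col g' + r * W = col g + (m + 1) * i := by
    have hsum : ∑ a : Fin (m + 1), (((g.1 a : ℕ) + i) % r + r * w (a : ℕ)) =
        ∑ a : Fin (m + 1), ((g.1 a : ℕ) + i) := Finset.sum_congr rfl fun a _ => hmod a
    rw [Finset.sum_add_distrib, Finset.sum_add_distrib, ← Finset.mul_sum, hWfin,
      ← hcolg'] at hsum
    have hconst : ∑ _a : Fin (m + 1), i = (m + 1) * i := by
      simp [Finset.sum_const, mul_comm]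
    rw [hconst] at hsum
    exact hsum
  constructor
  · show r * des g' + ((g.1 ⟨0, hn⟩ : ℕ) + i) % r = r * des g + (g.1 ⟨0, hn⟩ : ℕ) + i
    have hc0 : ((g.1 ⟨0, hn⟩ : ℕ) + i) % r + r * w 0 = (g.1 ⟨0, hn⟩ : ℕ) + i :=
      hmod ⟨0, hn⟩
    rw [hdes2, Nat.mul_add]
    linarith
  · show r * maj g' + col g' = r * maj g + col g + (m + 1) * i
    have h1 : r * maj g' = r * maj g + r * W := by rw [hmaj2]; ring
    linarith
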